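/- Let (Ω, ℱ, P) be a probability space and let x, y : Ω → ℝᵐ be square-integrable random vectors with E[x | σ(y)] = y almost surely. Let f : ℝᵐ → ℝᵐ be a measurable function with f∘x square-integrable. Then E[⟨f(x) − y, x − y⟩] = Σ_{j=1}^{m} E[ Cov(f(x)_j, x_j | σ(y)) ], where ⟨·,·⟩ is the Euclidean inner product on ℝᵐ. -/

import Mathlib

open MeasureTheory Finset


private lemma l2_mul_integrable {Ω : Type*} {mΩ : MeasurableSpace Ω} {μ : Measure Ω}
    {u v : Ω → ℝ} (hu : MemLp u 2 μ) (hv : MemLp v 2 μ) :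
    Integrable (fun ω => u ω * v ω) μ := by
  have h : MemLp (u • v) 1 μ := hv.smul hu
  rw [memLp_one_iff_integrable] at h
  exact h

private lemma condexp_clm_comm {α E F : Type*}
    [NormedAddCommGroup E] [NormedSpace ℝ E] [CompleteSpace E]
    [NormedAddCommGroup F] [NormedSpace ℝ F] [CompleteSpace F]
    {m m0 : MeasurableSpace α} {μ : Measure α} (hm : m ≤ m0) [SigmaFinite (μ.trim hm)]
    (L : E →L[ℝ] F) {f : α → E} (hf : Integrable f μ) :
    (fun ω => L ((μ[f|m]) ω)) =ᵐ[μ] μ[fun ω => L (f ω)|m] := by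
  refine ae_eq_condExp_of_forall_setIntegral_eq hm (L.integrable_comp hf) ?_ ?_ ?_
  · intro s _ _
    exact (L.integrable_comp integrable_condExp).integrableOn
  · intro s hs hμs
    rw [L.integral_comp_comm integrable_condExp.integrableOn,
        L.integral_comp_comm hf.integrableOn, setIntegral_condExp hm hf hs]
  · exact StronglyMeasurable.aestronglyMeasurable
      (L.continuous.comp_stronglyMeasurable stronglyMeasurable_condExp)

/-- Conditional expectation `E[f | 𝒢]` under measure `μ` (ambient σ-algebra `mΩ`). -/
noncomputable def condExpect {Ω : Type*} {mΩ : MeasurableSpace Ω} (𝒢 : MeasurableSpace Ω)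
    (μ : @Measure Ω mΩ) {E : Type*} [NormedAddCommGroup E] [NormedSpace ℝ E] [CompleteSpace E]
    (f : Ω → E) : Ω → E :=
  MeasureTheory.condExp (α := Ω) (E := E) (m := 𝒢) (m₀ := mΩ) μ f

/-- Conditional covariance of two real random variables given a sub-σ-algebra `𝒢`:
`Cov(U, V | 𝒢) = E[U·V | 𝒢] − E[U | 𝒢]·E[V | 𝒢]`. -/
noncomputable def condCov {Ω : Type*} {mΩ : MeasurableSpace Ω} (𝒢 : MeasurableSpace Ω)
    (μ : @Measure Ω mΩ) (U V : Ω → ℝ) : Ω → ℝ :=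
  fun ω => condExpect 𝒢 μ (fun ω' => U ω' * V ω') ω
    - condExpect 𝒢 μ U ω * condExpect 𝒢 μ V ω

/-- Conditional variance: `Var(U | 𝒢) = Cov(U, U | 𝒢)`. -/
noncomputable def condVar {Ω : Type*} {mΩ : MeasurableSpace Ω} (𝒢 : MeasurableSpace Ω)
    (μ : @Measure Ω mΩ) (U : Ω → ℝ) : Ω → ℝ :=
  condCov 𝒢 μ U U

open RealInnerProductSpace in
/-- **Cross term as a sum of expected conditional covariances.**
If `E[x | σ(y)] = y` a.s., then
`E[⟨f(x) − y, x − y⟩] = Σⱼ E[Cov(f(x)ⱼ, xⱼ | σ(y))]`. -/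
theorem integral_inner_sub_eq_sum_integral_condCov
    {Ω : Type*} [mΩ : MeasurableSpace Ω] (P : Measure Ω) [IsProbabilityMeasure P]
    (m : ℕ) (x y : Ω → EuclideanSpace ℝ (Fin m))
    (hxm : Measurable x) (hym : Measurable y)
    (hx : MemLp x 2 P) (hy : MemLp y 2 P)
    (hcond : condExpect (MeasurableSpace.comap y inferInstance) P x =ᵐ[P] y)
    (f : EuclideanSpace ℝ (Fin m) → EuclideanSpace ℝ (Fin m)) (hf : Measurable f)
    (hfx : MemLp (fun ω => f (x ω)) 2 P) :
    ∫ ω, ⟪f (x ω) - y ω, x ω - y ω⟫ ∂P =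
      ∑ j : Fin m, ∫ ω, condCov (MeasurableSpace.comap y inferInstance) P
        (fun ω' => f (x ω') j) (fun ω' => x ω' j) ω ∂P := by
  set 𝒢 := MeasurableSpace.comap y inferInstance with h𝒢
  have hm : 𝒢 ≤ mΩ := hym.comap_le
  haveI : SigmaFinite (P.trim hm) := inferInstance
  -- coordinate functions are in L²
  have hX2 : ∀ j, MemLp (fun ω => x ω j) 2 P := fun j => by
    simpa [Function.comp_def] using (EuclideanSpace.proj (𝕜 := ℝ) j).comp_memLp' hx
  have hY2 : ∀ j, MemLp (fun ω => y ω j) 2 P := fun j => by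
    simpa [Function.comp_def] using (EuclideanSpace.proj (𝕜 := ℝ) j).comp_memLp' hy
  have hF2 : ∀ j, MemLp (fun ω => f (x ω) j) 2 P := fun j => by
    simpa [Function.comp_def] using (EuclideanSpace.proj (𝕜 := ℝ) j).comp_memLp' hfx
  -- y is 𝒢-measurable
  have hy𝒢 : Measurable[𝒢] y := Measurable.of_comap_le le_rfl
  have hYsm : ∀ j, StronglyMeasurable[𝒢] (fun ω => y ω j) := fun j =>
    ((EuclideanSpace.proj (𝕜 := ℝ) j).continuous.measurable.comp hy𝒢).stronglyMeasurable
  -- conditional expectation of coordinates of x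
  have hcX : ∀ j, (P[fun ω => x ω j|𝒢]) =ᵐ[P] fun ω => y ω j := fun j => by
    have h1 := condexp_clm_comm hm (EuclideanSpace.proj (𝕜 := ℝ) j) (hx.integrable one_le_two)
    refine Filter.EventuallyEq.trans (Filter.EventuallyEq.symm h1) ?_
    filter_upwards [hcond] with ω hω
    simp only [condExpect] at hω
    show (EuclideanSpace.proj (𝕜 := ℝ) j) ((P[x|𝒢]) ω) = y ω j
    rw [hω]; rfl
  -- pull-out property
  have pull : ∀ j (g : Ω → ℝ), MemLp g 2 P →
      (P[fun ω => y ω j * g ω|𝒢]) =ᵐ[P] fun ω => y ω j * (P[g|𝒢]) ω := by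
    intro j g hg
    have h := condExp_mul_of_stronglyMeasurable_left (hYsm j)
      (l2_mul_integrable (hY2 j) hg) (hg.integrable one_le_two)
    exact h
  have pullInt : ∀ j (g : Ω → ℝ), MemLp g 2 P →
      ∫ ω, y ω j * (P[g|𝒢]) ω ∂P = ∫ ω, y ω j * g ω ∂P := by
    intro j g hg
    rw [← integral_congr_ae (pull j g hg), integral_condExp hm]
  have hYX : ∀ j, ∫ ω, y ω j * x ω j ∂P = ∫ ω, y ω j * y ω j ∂P := by
    intro j
    rw [← pullInt j _ (hX2 j)]
    refine (integral_congr_ae ?_).symm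
    filter_upwards [hcX j] with ω h1
    rw [h1]
  -- per coordinate identity
  have key : ∀ j : Fin m,
      ∫ ω, (f (x ω) j - y ω j) * (x ω j - y ω j) ∂P
        = ∫ ω, condCov 𝒢 P (fun ω' => f (x ω') j) (fun ω' => x ω' j) ω ∂P := by
    intro j
    have hRHSae : condCov 𝒢 P (fun ω' => f (x ω') j) (fun ω' => x ω' j) =ᵐ[P]
        fun ω => (P[fun ω' => f (x ω') j * x ω' j|𝒢]) ω
          - (P[fun ω' => y ω' j * f (x ω') j|𝒢]) ω := by
      filter_upwards [hcX j, pull j (fun ω => f (x ω) j) (hF2 j)] with ω h1 h2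
      simp only [condCov, condExpect]
      rw [h1, mul_comm, ← h2]
    have hRHS : ∫ ω, condCov 𝒢 P (fun ω' => f (x ω') j) (fun ω' => x ω' j) ω ∂P
        = (∫ ω, f (x ω) j * x ω j ∂P) - ∫ ω, y ω j * f (x ω) j ∂P := by
      rw [integral_congr_ae hRHSae, integral_sub integrable_condExp integrable_condExp,
        integral_condExp hm, integral_condExp hm]
    have expand : (fun ω => (f (x ω) j - y ω j) * (x ω j - y ω j))
        = fun ω => (f (x ω) j * x ω j - y ω j * f (x ω) j - y ω j * x ω j)
            + y ω j * y ω j := by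
      funext ω; ring
    have iFX := l2_mul_integrable (hF2 j) (hX2 j)
    have iYF := l2_mul_integrable (hY2 j) (hF2 j)
    have iYX := l2_mul_integrable (hY2 j) (hX2 j)
    have iYY := l2_mul_integrable (hY2 j) (hY2 j)
    have i2 : Integrable (fun ω => f (x ω) j * x ω j - y ω j * f (x ω) j) P := iFX.sub iYF
    have i1 : Integrable
        (fun ω => f (x ω) j * x ω j - y ω j * f (x ω) j - y ω j * x ω j) P := i2.sub iYX
    rw [expand, integral_add i1 iYY, integral_sub i2 iYX, integral_sub iFX iYF, hYX j, hRHS]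
    ring
  -- expand the inner product
  have hinner : ∀ ω, ⟪f (x ω) - y ω, x ω - y ω⟫
      = ∑ j : Fin m, (f (x ω) j - y ω j) * (x ω j - y ω j) := by
    intro ω
    simp [PiLp.inner_apply, RCLike.inner_apply, conj_trivial, PiLp.sub_apply, mul_comm]
  have iTerm : ∀ j : Fin m,
      Integrable (fun ω => (f (x ω) j - y ω j) * (x ω j - y ω j)) P := fun j =>
    l2_mul_integrable ((hF2 j).sub (hY2 j)) ((hX2 j).sub (hY2 j))
  simp_rw [hinner]
  rw [integral_finset_sum _ (fun j _ => iTerm j)]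
  exact Finset.sum_congr rfl fun j _ => key j
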